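/- Under the assumptions of the disintegration continuity theorem (countable base τ_b for S_1 with S_1 ∈ τ_b and equicontinuity at s_3 of the families {s_3 ↦ P(O × C | s_3) : C open in S_2} for all finite intersections O of base elements), if additionally along every convergent sequence s_3^(n) → s_3 the kernels H(· | s_2, s_3^(n_k)) converge setwise (not just weakly) to H(· | s_2, s_3) for P'(·|s_3)-almost all s_2 along a subsequence, then the stochastic kernel P on S_1 × S_2 given S_3 is setwise continuous: P(E | s_3^(n)) → P(E | s_3) for every Borel E ⊆ S_1 × S_2. -/

import Mathlib

open MeasureTheory Filter Topology Set ProbabilityTheory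

/-- If `μ C ≤ ν C + ε` for all measurable `C`, then lintegrals of `[0,1]`-valued
functions satisfy the same bound. -/
lemma aux_lint_le {α : Type*} [MeasurableSpace α] (μ ν : Measure α)
    (f : α → ENNReal) (hf : Measurable f) (hf1 : ∀ a, f a ≤ 1) (ε : ENNReal)
    (h : ∀ C : Set α, MeasurableSet C → μ C ≤ ν C + ε) :
    ∫⁻ a, f a ∂μ ≤ (∫⁻ a, f a ∂ν) + ε := by
  set g : α → ℝ := fun a => (f a).toReal with hg
  have hgm : Measurable g := hf.ennreal_toReal
  have hg1 : ∀ a, g a ≤ 1 := by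
    intro a
    have := ENNReal.toReal_mono ENNReal.one_ne_top (hf1 a)
    simpa using this
  have key : ∀ ρ : Measure α, ∫⁻ a, f a ∂ρ = ∫⁻ t in Set.Ioi (0:ℝ), ρ {a | t < g a} := by
    intro ρ
    rw [← MeasureTheory.lintegral_eq_lintegral_meas_lt ρ
      (Eventually.of_forall fun a => ENNReal.toReal_nonneg) hgm.aemeasurable]
    exact lintegral_congr fun a =>
      (ENNReal.ofReal_toReal (ne_top_of_le_ne_top ENNReal.one_ne_top (hf1 a))).symm
  rw [key μ, key ν]
  have hmono : ∀ t ∈ Set.Ioi (0:ℝ),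
      μ {a | t < g a} ≤ ν {a | t < g a} + Set.indicator (Set.Ioo (0:ℝ) 1) (fun _ => ε) t := by
    intro t ht
    by_cases h1 : t < 1
    · rw [Set.indicator_of_mem (Set.mem_Ioo.mpr ⟨ht, h1⟩)]
      exact h _ (measurableSet_lt measurable_const hgm)
    · have hemp : {a | t < g a} = ∅ := by
        ext a
        simp only [Set.mem_setOf_eq, Set.mem_empty_iff_false, iff_false, not_lt]
        exact (hg1 a).trans (le_of_not_gt h1)
      rw [hemp]
      simp
  calc ∫⁻ t in Set.Ioi (0:ℝ), μ {a | t < g a}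
      ≤ ∫⁻ t in Set.Ioi (0:ℝ),
          (ν {a | t < g a} + Set.indicator (Set.Ioo (0:ℝ) 1) (fun _ => ε) t) :=
        setLIntegral_mono' measurableSet_Ioi hmono
    _ = (∫⁻ t in Set.Ioi (0:ℝ), ν {a | t < g a})
        + ∫⁻ t in Set.Ioi (0:ℝ), Set.indicator (Set.Ioo (0:ℝ) 1) (fun _ => ε) t :=
        lintegral_add_right _ (measurable_const.indicator measurableSet_Ioo)
    _ ≤ _ := by
        gcongr
        rw [lintegral_indicator measurableSet_Ioo]
        rw [Measure.restrict_restrict measurableSet_Ioo]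
        have : Set.Ioo (0:ℝ) 1 ∩ Set.Ioi 0 = Set.Ioo 0 1 := by
          ext x; simp only [Set.mem_inter_iff, Set.mem_Ioo, Set.mem_Ioi, and_iff_left_iff_imp]
          exact fun hx => hx.1
        simp [this, Real.volume_Ioo]

/-- Extend the disintegration identity from rectangles to all measurable sets. -/
lemma aux_disint {S1 S2 : Type*} [MeasurableSpace S1] [MeasurableSpace S2]
    (Pt : Measure (S1 × S2)) [IsProbabilityMeasure Pt]
    (K : S2 → Measure S1) (hKm : Measurable K) (hKprob : ∀ s2, IsProbabilityMeasure (K s2))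
    (hdis : ∀ (B : Set S1) (C : Set S2), MeasurableSet B → MeasurableSet C →
      Pt (B ×ˢ C) = ∫⁻ s2 in C, K s2 B ∂(Pt.map Prod.snd))
    {F : Set (S1 × S2)} (hF : MeasurableSet F) :
    Pt F = ∫⁻ s2, K s2 (Prod.mk s2 ⁻¹' (Prod.swap ⁻¹' F)) ∂(Pt.map Prod.snd) := by
  set μ : Measure S2 := Pt.map Prod.snd with hμ
  haveI : IsProbabilityMeasure μ := Measure.isProbabilityMeasure_map measurable_snd.aemeasurable
  set κ : Kernel S2 S1 := ⟨K, hKm⟩ with hκ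
  haveI : IsMarkovKernel κ := ⟨fun s2 => hKprob s2⟩
  have hswap : Pt.map Prod.swap = μ ⊗ₘ κ := by
    refine ext_of_generate_finite _ generateFrom_prod.symm isPiSystem_prod ?_ ?_
    · rintro s ⟨C, hC, B, hB, rfl⟩
      simp only [Set.mem_setOf_eq] at hC hB
      rw [Measure.map_apply measurable_swap (hC.prod hB),
        Measure.compProd_apply_prod hC hB]
      have hpre : Prod.swap ⁻¹' (C ×ˢ B) = B ×ˢ C := by
        ext p; simp [Set.mem_prod, and_comm]
      rw [hpre, hdis B C hB hC]
      rfl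
    · rw [Measure.map_apply measurable_swap MeasurableSet.univ]
      simp
  have hF' : MeasurableSet (Prod.swap ⁻¹' F) := hF.preimage measurable_swap
  have h1 : Pt F = (Pt.map Prod.swap) (Prod.swap ⁻¹' F) := by
    rw [Measure.map_apply measurable_swap hF', Set.preimage_preimage]
    simp
  rw [h1, hswap, Measure.compProd_apply hF']
  rfl

/-- From a uniform bound over open sets to a uniform bound over all measurable
sets, by outer regularity. -/
lemma aux_tv {S2 : Type*} [MetricSpace S2] [MeasurableSpace S2] [BorelSpace S2]
    (μ ν : Measure S2) [IsProbabilityMeasure μ] [IsProbabilityMeasure ν]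
    (S : ℝ)
    (hopen : ∀ U : Set S2, IsOpen U → |(μ U).toReal - (ν U).toReal| ≤ S)
    {C : Set S2} (hC : MeasurableSet C) :
    |(μ C).toReal - (ν C).toReal| ≤ S := by
  refine le_of_forall_pos_le_add fun η hη => ?_
  set ρ : Measure S2 := μ + ν with hρ
  obtain ⟨U, hCU, hUo, hU⟩ := Set.exists_isOpen_lt_add (μ := ρ) C (measure_ne_top ρ C)
    (ε := ENNReal.ofReal η) (by simp [hη, ne_of_gt])
  have hν : ∀ (m : Measure S2) [IsProbabilityMeasure m], ∀ s : Set S2, m s ≠ ⊤ :=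
    fun m _ s => measure_ne_top m s
  have h1 : μ U ≤ μ C + ENNReal.ofReal η := by
    have h2 : μ U + ν C ≤ (μ C + ENNReal.ofReal η) + ν C := by
      calc μ U + ν C ≤ μ U + ν U := add_le_add_right (measure_mono hCU) _
        _ = ρ U := (Measure.add_apply μ ν U).symm
        _ ≤ ρ C + ENNReal.ofReal η := hU.le
        _ = (μ C + ENNReal.ofReal η) + ν C := by
            rw [Measure.add_apply]; ring
    exact (ENNReal.add_le_add_iff_right (measure_ne_top ν C)).mp h2
  have h1' : ν U ≤ ν C + ENNReal.ofReal η := by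
    have h2 : ν U + μ C ≤ (ν C + ENNReal.ofReal η) + μ C := by
      calc ν U + μ C ≤ μ U + ν U := by rw [add_comm]; exact add_le_add_left (measure_mono hCU) _
        _ = ρ U := (Measure.add_apply μ ν U).symm
        _ ≤ ρ C + ENNReal.ofReal η := hU.le
        _ = (ν C + ENNReal.ofReal η) + μ C := by
            rw [Measure.add_apply]; ring
    exact (ENNReal.add_le_add_iff_right (measure_ne_top μ C)).mp h2
  have hfin : ∀ (m : Measure S2) [IsProbabilityMeasure m], ∀ s : Set S2,
      m s ≠ ⊤ := fun m _ s => measure_ne_top m s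
  have hfin2 : ∀ (m : Measure S2) [IsProbabilityMeasure m], ∀ s : Set S2,
      m s + ENNReal.ofReal η ≠ ⊤ := fun m _ s =>
    ENNReal.add_ne_top.mpr ⟨measure_ne_top m s, ENNReal.ofReal_ne_top⟩
  have ra : (μ U).toReal ≤ (μ C).toReal + η := by
    have := ENNReal.toReal_mono (hfin2 μ C) h1
    rwa [ENNReal.toReal_add (measure_ne_top μ C) ENNReal.ofReal_ne_top,
      ENNReal.toReal_ofReal hη.le] at this
  have rb : (ν U).toReal ≤ (ν C).toReal + η := by
    have := ENNReal.toReal_mono (hfin2 ν C) h1'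
    rwa [ENNReal.toReal_add (measure_ne_top ν C) ENNReal.ofReal_ne_top,
      ENNReal.toReal_ofReal hη.le] at this
  have rc : (μ C).toReal ≤ (μ U).toReal :=
    ENNReal.toReal_mono (measure_ne_top μ U) (measure_mono hCU)
  have rd : (ν C).toReal ≤ (ν U).toReal :=
    ENNReal.toReal_mono (measure_ne_top ν U) (measure_mono hCU)
  have habs := abs_le.mp (hopen U hUo)
  exact abs_le.mpr ⟨by linarith [habs.1], by linarith [habs.2]⟩

theorem stmt17 {S1 S2 S3 : Type*}
    [MetricSpace S1] [SecondCountableTopology S1] [MeasurableSpace S1] [BorelSpace S1]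
    [MetricSpace S2] [SecondCountableTopology S2] [MeasurableSpace S2] [BorelSpace S2]
    [MetricSpace S3] [SecondCountableTopology S3] [MeasurableSpace S3] [BorelSpace S3]
    (P : S3 → Measure (S1 × S2)) (hPm : Measurable P)
    (hPprob : ∀ s, IsProbabilityMeasure (P s))
    (H : S2 → S3 → Measure S1) (hHm : Measurable (Function.uncurry H))
    (hHprob : ∀ s2 s3, IsProbabilityMeasure (H s2 s3))
    (hdis : ∀ (s3 : S3) (B : Set S1) (C : Set S2), MeasurableSet B → MeasurableSet C →
      P s3 (B ×ˢ C) = ∫⁻ s2 in C, H s2 s3 B ∂((P s3).map Prod.snd))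
    (τb : Set (Set S1)) (hc : τb.Countable)
    (hb : TopologicalSpace.IsTopologicalBasis τb) (huniv : Set.univ ∈ τb)
    (heq : ∀ (s3 : S3) (N : ℕ) (O : Fin (N + 1) → Set S1), (∀ j, O j ∈ τb) →
      Tendsto (fun t => ⨆ (C : Set S2) (_ : IsOpen C),
        |(P t ((⋂ j, O j) ×ˢ C)).toReal - (P s3 ((⋂ j, O j) ×ˢ C)).toReal|)
        (𝓝 s3) (𝓝 0))
    (hsetwise : ∀ (s3 : S3) (s3n : ℕ → S3), Tendsto s3n atTop (𝓝 s3) →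
      ∃ φ : ℕ → ℕ, StrictMono φ ∧ ∃ Cs : Set S2, MeasurableSet Cs ∧
        ((P s3).map Prod.snd) Cs = 1 ∧
        ∀ s2 ∈ Cs, ∀ B : Set S1, MeasurableSet B →
          Tendsto (fun k => H s2 (s3n (φ k)) B) atTop (𝓝 (H s2 s3 B))) :
    ∀ (s3 : S3) (s3n : ℕ → S3), Tendsto s3n atTop (𝓝 s3) →
      ∀ E : Set (S1 × S2), MeasurableSet E →
        Tendsto (fun n => P (s3n n) E) atTop (𝓝 (P s3 E)) := by
  intro s3 s3n hs3n E hE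
  -- measurability of the kernel slices
  have hκm : ∀ t : S3, Measurable (fun s2 => H s2 t) := fun t =>
    hHm.comp (measurable_id.prodMk measurable_const)
  -- the sup-over-open-sets distance function
  set S : S3 → ℝ := fun t => ⨆ (C : Set S2) (_ : IsOpen C),
    |(P t ((Set.univ : Set S1) ×ˢ C)).toReal - (P s3 ((Set.univ : Set S1) ×ˢ C)).toReal|
    with hSdef
  have hS : Tendsto S (𝓝 s3) (𝓝 0) := by
    have := heq s3 0 (fun _ => Set.univ) (fun _ => huniv)
    simpa using this
  -- properties of S
  have hSprop : ∀ t : S3, 0 ≤ S t ∧ ∀ C : Set S2, MeasurableSet C →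
      |(((P t).map Prod.snd) C).toReal - (((P s3).map Prod.snd) C).toReal| ≤ S t := by
    intro t
    set v : Set S2 → ℝ := fun C =>
      |(P t ((Set.univ : Set S1) ×ˢ C)).toReal - (P s3 ((Set.univ : Set S1) ×ˢ C)).toReal|
      with hv
    have hv2 : ∀ C, v C ≤ 2 := by
      intro C
      have h1 : (P t ((Set.univ : Set S1) ×ˢ C)).toReal ≤ 1 := by
        haveI := hPprob t
        have := ENNReal.toReal_mono ENNReal.one_ne_top (prob_le_one (μ := P t)
          (s := (Set.univ : Set S1) ×ˢ C))
        simpa using this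
      have h2 : (P s3 ((Set.univ : Set S1) ×ˢ C)).toReal ≤ 1 := by
        haveI := hPprob s3
        have := ENNReal.toReal_mono ENNReal.one_ne_top (prob_le_one (μ := P s3)
          (s := (Set.univ : Set S1) ×ˢ C))
        simpa using this
      have h3 : (0:ℝ) ≤ (P t ((Set.univ : Set S1) ×ˢ C)).toReal := ENNReal.toReal_nonneg
      have h4 : (0:ℝ) ≤ (P s3 ((Set.univ : Set S1) ×ˢ C)).toReal := ENNReal.toReal_nonneg
      rw [hv]
      exact abs_le.mpr ⟨by linarith, by linarith⟩
    have hbdd : BddAbove (Set.range fun C : Set S2 => ⨆ (_ : IsOpen C), v C) := by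
      refine ⟨2, ?_⟩
      rintro x ⟨C, rfl⟩
      exact Real.iSup_le (fun _ => hv2 C) (by norm_num)
    have hle : ∀ U : Set S2, IsOpen U → v U ≤ S t := by
      intro U hU
      refine le_ciSup_of_le hbdd U ?_
      rw [ciSup_pos hU]
    have hS0 : 0 ≤ S t := (abs_nonneg _).trans (hle ∅ isOpen_empty)
    refine ⟨hS0, ?_⟩
    intro C hC
    haveI := hPprob t; haveI := hPprob s3
    haveI : IsProbabilityMeasure ((P t).map Prod.snd) :=
      Measure.isProbabilityMeasure_map measurable_snd.aemeasurable
    haveI : IsProbabilityMeasure ((P s3).map Prod.snd) :=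
      Measure.isProbabilityMeasure_map measurable_snd.aemeasurable
    refine aux_tv ((P t).map Prod.snd) ((P s3).map Prod.snd) (S t) ?_ hC
    intro U hU
    have e1 : ((P t).map Prod.snd) U = P t ((Set.univ : Set S1) ×ˢ U) := by
      rw [Measure.map_apply measurable_snd hU.measurableSet, Set.univ_prod]
    have e2 : ((P s3).map Prod.snd) U = P s3 ((Set.univ : Set S1) ×ˢ U) := by
      rw [Measure.map_apply measurable_snd hU.measurableSet, Set.univ_prod]
    rw [e1, e2]
    exact hle U hU
  -- subsequence criterion
  apply tendsto_of_subseq_tendsto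
  intro ns hns
  obtain ⟨φ, hφ, Cs, hCsm, hCs1, hconv⟩ := hsetwise s3 (fun n => s3n (ns n)) (hs3n.comp hns)
  refine ⟨φ, ?_⟩
  set tk : ℕ → S3 := fun k => s3n (ns (φ k)) with htkdef
  have htk : Tendsto tk atTop (𝓝 s3) := (hs3n.comp hns).comp hφ.tendsto_atTop
  set μ : Measure S2 := (P s3).map Prod.snd with hμdef
  set μk : ℕ → Measure S2 := fun k => (P (tk k)).map Prod.snd with hμkdef
  haveI := hPprob s3
  haveI : IsProbabilityMeasure μ := Measure.isProbabilityMeasure_map measurable_snd.aemeasurable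
  set E' : Set (S2 × S1) := Prod.swap ⁻¹' E with hE'def
  have hE' : MeasurableSet E' := hE.preimage measurable_swap
  set f : ℕ → S2 → ENNReal := fun k s2 => H s2 (tk k) (Prod.mk s2 ⁻¹' E') with hfdef
  set flim : S2 → ENNReal := fun s2 => H s2 s3 (Prod.mk s2 ⁻¹' E') with hflimdef
  have hfm : ∀ t : S3, Measurable (fun s2 => H s2 t (Prod.mk s2 ⁻¹' E')) := by
    intro t
    haveI : IsMarkovKernel (⟨fun s2 => H s2 t, hκm t⟩ : Kernel S2 S1) :=
      ⟨fun s2 => hHprob s2 t⟩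
    exact Kernel.measurable_kernel_prodMk_left (κ := (⟨fun s2 => H s2 t, hκm t⟩ : Kernel S2 S1))
      hE'
  have hf1 : ∀ t : S3, ∀ s2, H s2 t (Prod.mk s2 ⁻¹' E') ≤ 1 := by
    intro t s2
    haveI := hHprob s2 t
    exact prob_le_one
  have hPk : ∀ k, P (tk k) E = ∫⁻ s2, f k s2 ∂(μk k) := by
    intro k
    haveI := hPprob (tk k)
    exact aux_disint (P (tk k)) (fun s2 => H s2 (tk k)) (hκm (tk k))
      (fun s2 => hHprob s2 (tk k)) (fun B C hB hC => hdis (tk k) B C hB hC) hE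
  have hPlim : P s3 E = ∫⁻ s2, flim s2 ∂μ :=
    aux_disint (P s3) (fun s2 => H s2 s3) (hκm s3)
      (fun s2 => hHprob s2 s3) (fun B C hB hC => hdis s3 B C hB hC) hE
  -- dominated convergence against the fixed measure μ
  have hae : ∀ᵐ s2 ∂μ, Tendsto (fun k => f k s2) atTop (𝓝 (flim s2)) := by
    have hcompl : μ Csᶜ = 0 := by
      rw [measure_compl hCsm (measure_ne_top _ _), hCs1]
      simp
    have hmem : ∀ᵐ s2 ∂μ, s2 ∈ Cs := by
      rw [MeasureTheory.ae_iff]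
      simpa [Set.compl_def] using hcompl
    filter_upwards [hmem] with s2 hs2
    exact hconv s2 hs2 _ (hE'.preimage measurable_prodMk_left)
  have hDCT : Tendsto (fun k => ∫⁻ s2, f k s2 ∂μ) atTop (𝓝 (∫⁻ s2, flim s2 ∂μ)) := by
    refine tendsto_lintegral_of_dominated_convergence (fun _ => 1)
      (fun k => hfm (tk k)) (fun k => Eventually.of_forall fun s2 => hf1 (tk k) s2) ?_ hae
    simp
  -- total-variation comparison between μk and μ
  have hENN : ∀ (a b : ENNReal) (s : ℝ), a ≠ ⊤ → b ≠ ⊤ → 0 ≤ s →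
      a.toReal ≤ b.toReal + s → a ≤ b + ENNReal.ofReal s := by
    intro a b s ha hb hs h
    rw [← ENNReal.ofReal_toReal ha, ← ENNReal.ofReal_toReal hb,
      ← ENNReal.ofReal_add ENNReal.toReal_nonneg hs]
    exact ENNReal.ofReal_le_ofReal h
  have hcomp : ∀ k, (∀ C : Set S2, MeasurableSet C → μk k C ≤ μ C + ENNReal.ofReal (S (tk k)))
      ∧ (∀ C : Set S2, MeasurableSet C → μ C ≤ μk k C + ENNReal.ofReal (S (tk k))) := by
    intro k
    haveI := hPprob (tk k)
    haveI : IsProbabilityMeasure (μk k) := Measure.isProbabilityMeasure_map measurable_snd.aemeasurable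
    obtain ⟨hS0, hSb⟩ := hSprop (tk k)
    constructor
    · intro C hC
      have := abs_le.mp (hSb C hC)
      exact hENN _ _ _ (measure_ne_top _ _) (measure_ne_top _ _) hS0 (by linarith [this.2])
    · intro C hC
      have := abs_le.mp (hSb C hC)
      exact hENN _ _ _ (measure_ne_top _ _) (measure_ne_top _ _) hS0 (by linarith [this.1])
  have hup : ∀ k, ∫⁻ s2, f k s2 ∂(μk k) ≤ (∫⁻ s2, f k s2 ∂μ) + ENNReal.ofReal (S (tk k)) :=
    fun k => aux_lint_le (μk k) μ (f k) (hfm (tk k)) (hf1 (tk k)) _ (hcomp k).1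
  have hdown : ∀ k, (∫⁻ s2, f k s2 ∂μ) - ENNReal.ofReal (S (tk k)) ≤ ∫⁻ s2, f k s2 ∂(μk k) :=
    fun k => tsub_le_iff_right.mpr
      (aux_lint_le μ (μk k) (f k) (hfm (tk k)) (hf1 (tk k)) _ (hcomp k).2)
  have hStk : Tendsto (fun k => ENNReal.ofReal (S (tk k))) atTop (𝓝 0) := by
    have h := hS.comp htk
    have := (ENNReal.continuous_ofReal.tendsto 0).comp h
    simpa [Function.comp_def] using this
  have hlim1 : Tendsto (fun k => (∫⁻ s2, f k s2 ∂μ) - ENNReal.ofReal (S (tk k))) atTop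
      (𝓝 (∫⁻ s2, flim s2 ∂μ)) := by
    have := ENNReal.Tendsto.sub hDCT hStk (Or.inr (by simp))
    simpa using this
  have hlim2 : Tendsto (fun k => (∫⁻ s2, f k s2 ∂μ) + ENNReal.ofReal (S (tk k))) atTop
      (𝓝 (∫⁻ s2, flim s2 ∂μ)) := by
    have := hDCT.add hStk
    simpa using this
  have hfinal : Tendsto (fun k => ∫⁻ s2, f k s2 ∂(μk k)) atTop (𝓝 (∫⁻ s2, flim s2 ∂μ)) :=
    tendsto_of_tendsto_of_tendsto_of_le_of_le hlim1 hlim2 hdown hup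
  rw [hPlim]
  have heq2 : (fun k => P (s3n (ns (φ k))) E) = fun k => ∫⁻ s2, f k s2 ∂(μk k) :=
    funext hPk
  rw [show (fun k => P (s3n (ns (φ k))) E) = fun k => ∫⁻ s2, f k s2 ∂(μk k) from funext hPk]
  exact hfinal
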